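/- Let M be a nonempty finite market of m stocks with prices S'_{i,t} ≥ 0 for times t = 0,…,f such that S'_{i,0} = 1 for every i, and suppose there is a real A > 0 with Φ₁(M,t) = A for every t = 1,…,f (all columns have the same market average). Define new prices by S''_{i,0} = 1 and S''_{i,t} = 2^{S'_{i,t}} for t ≥ 1, and let ε be a real with 0 < ε < 1 and ε' = log₂(1/(1−ε))/A. Then for every nonempty subset M_k ⊆ M and every t = 1,…,f: the price-relative index of the new prices satisfies Φ₄(M_k,t)/Φ₄(M_k,0) ≥ (1−ε)·Φ₄(M,t)/Φ₄(M,0) if and only if the price-weighted index of the original prices satisfies Φ₁(M_k,t)/Φ₁(M_k,0) ≥ (1−ε')·Φ₁(M,t)/Φ₁(M,0). -/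

import Mathlib

theorem stmt_17 {ι : Type*} (M : Finset ι) (hM : M.Nonempty)
    (f : ℕ) (S' : ι → ℕ → ℝ) (hS' : ∀ i ∈ M, ∀ t ≤ f, 0 ≤ S' i t)
    (hS'0 : ∀ i ∈ M, S' i 0 = 1)
    (Φ₁ : Finset ι → ℕ → ℝ)
    (hΦ₁ : ∀ B : Finset ι, ∀ t, Φ₁ B t = (∑ i ∈ B, S' i t) / B.card)
    (A : ℝ) (hA : 0 < A) (hAvg : ∀ t, 1 ≤ t → t ≤ f → Φ₁ M t = A)
    (S'' : ι → ℕ → ℝ) (hS''0 : ∀ i ∈ M, S'' i 0 = 1)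
    (hS'' : ∀ i ∈ M, ∀ t, 1 ≤ t → t ≤ f → S'' i t = 2 ^ (S' i t))
    (Φ₄ : Finset ι → ℕ → ℝ)
    (hΦ₄ : ∀ B : Finset ι, ∀ t,
      Φ₄ B t = (∏ i ∈ B, S'' i t / S'' i 0) ^ ((1 : ℝ) / B.card))
    (ε ε' : ℝ) (hε0 : 0 < ε) (hε1 : ε < 1)
    (hε' : ε' = Real.logb 2 (1 / (1 - ε)) / A)
    (Mk : Finset ι) (hMk : Mk ⊆ M) (hMkne : Mk.Nonempty)
    (t : ℕ) (ht1 : 1 ≤ t) (htf : t ≤ f) :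
    Φ₄ Mk t / Φ₄ Mk 0 ≥ (1 - ε) * (Φ₄ M t / Φ₄ M 0) ↔
      Φ₁ Mk t / Φ₁ Mk 0 ≥ (1 - ε') * (Φ₁ M t / Φ₁ M 0) := by
  have h1ε : (0 : ℝ) < 1 - ε := by linarith
  have key : ∀ B : Finset ι, B ⊆ M → B.Nonempty →
      Φ₄ B 0 = 1 ∧ Φ₁ B 0 = 1 ∧ Φ₄ B t = (2 : ℝ) ^ (Φ₁ B t) := by
    intro B hBM hBne
    have hcard : (0 : ℝ) < B.card := by exact_mod_cast hBne.card_pos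
    have hprod0 : ∀ t', (∏ i ∈ B, S'' i t' / S'' i 0) = ∏ i ∈ B, S'' i t' := by
      intro t'
      exact Finset.prod_congr rfl fun i hi => by rw [hS''0 i (hBM hi), div_one]
    refine ⟨?_, ?_, ?_⟩
    · rw [hΦ₄, hprod0, Finset.prod_congr rfl fun i hi => hS''0 i (hBM hi)]
      simp
    · rw [hΦ₁, Finset.sum_congr rfl fun i hi => hS'0 i (hBM hi)]
      simp
      exact hBne.ne_empty
    · rw [hΦ₄, hprod0, hΦ₁,
        Finset.prod_congr rfl fun i hi => hS'' i (hBM hi) t ht1 htf,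
        ← Real.rpow_sum_of_pos (by norm_num : (0:ℝ) < 2),
        ← Real.rpow_mul (by norm_num : (0:ℝ) ≤ 2)]
      ring_nf
  obtain ⟨hMk40, hMk10, hMk4t⟩ := key Mk hMk hMkne
  obtain ⟨hM40, hM10, hM4t⟩ := key M le_rfl hM
  rw [hMk40, hMk10, hM40, hM10, hMk4t, hM4t, hAvg t ht1 htf, div_one, div_one,
    div_one, div_one]
  have hAε : (1 - ε) * (2:ℝ) ^ A = (2:ℝ) ^ (Real.logb 2 (1 - ε) + A) := by
    rw [Real.rpow_add (by norm_num : (0:ℝ) < 2),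
      Real.rpow_logb (by norm_num) (by norm_num) h1ε]
  have hε'A : (1 - ε') * A = Real.logb 2 (1 - ε) + A := by
    rw [hε', one_div, Real.logb_inv]
    field_simp
    ring
  rw [hAε, hε'A, ge_iff_le, ge_iff_le,
    Real.rpow_le_rpow_left_iff (by norm_num : (1:ℝ) < 2)]
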